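/- For every n ≥ 1, the number of regular elements of the semigroup OCT_n of order-preserving full contractions of the chain [n] is |Reg(OCT_n)| = (n(n−1)(2n−1) + 6n)/6. -/

import Mathlib

/-- `α` is a (full) contraction of the chain `{1, …, n}` (modelled as `Fin n`):
`|xα - yα| ≤ |x - y|` for all `x, y`. -/
def IsContraction {n : ℕ} (α : Function.End (Fin n)) : Prop :=
  ∀ x y : Fin n, |((α x : ℕ) : ℤ) - ((α y : ℕ) : ℤ)| ≤ |((x : ℕ) : ℤ) - ((y : ℕ) : ℤ)|

/-- `OCT n`: the order-preserving full contractions of the chain. -/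
def OCT (n : ℕ) : Set (Function.End (Fin n)) :=
  {α | IsContraction α ∧ Monotone α}

/-- `ORCT n`: the order-preserving or order-reversing full contractions of the chain. -/
def ORCT (n : ℕ) : Set (Function.End (Fin n)) :=
  {α | IsContraction α ∧ (Monotone α ∨ Antitone α)}

/-- The regular elements of `OCT n`. -/
def RegOCT (n : ℕ) : Set (Function.End (Fin n)) :=
  {α | α ∈ OCT n ∧ ∃ β ∈ OCT n, α * β * α = α}

/-- The regular elements of `ORCT n`. -/
def RegORCT (n : ℕ) : Set (Function.End (Fin n)) :=
  {α | α ∈ ORCT n ∧ ∃ β ∈ ORCT n, α * β * α = α}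

/-- `|Im α|`, the rank of a transformation. -/
noncomputable def imCard {n : ℕ} (α : Function.End (Fin n)) : ℕ :=
  (Set.range α).ncard

namespace RegOCTCount

lemma abs_natCast_sub (p q : ℕ) : |(p:ℤ) - q| = ((p - q) + (q - p) : ℕ) := by
  rcases le_total p q with h | h
  · rw [abs_of_nonpos (by omega)]; omega
  · rw [abs_of_nonneg (by omega)]; omega

def Fmap (n a d u : ℕ) : Function.End (Fin n) :=
  fun x => ⟨min (a + min d (x.1 - u)) (n - 1), by have := x.2; omega⟩

lemma Fmap_val {n a d u : ℕ} (had : a + d ≤ n - 1) (x : Fin n) :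
    (Fmap n a d u x).1 = a + min d (x.1 - u) := by
  have := x.2
  show min (a + min d (x.1 - u)) (n - 1) = a + min d (x.1 - u)
  omega

lemma Fmap_mono (n a d u : ℕ) : Monotone (Fmap n a d u) := by
  intro x y h
  have h' : x.1 ≤ y.1 := h
  show min (a + min d (x.1 - u)) (n - 1) ≤ min (a + min d (y.1 - u)) (n - 1)
  omega

lemma Fmap_contr (n a d u : ℕ) : IsContraction (Fmap n a d u) := by
  intro x y
  rw [abs_natCast_sub, abs_natCast_sub]
  have e1 : ((Fmap n a d u x : Fin n) : ℕ) = min (a + min d (x.1 - u)) (n - 1) := rfl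
  have e2 : ((Fmap n a d u y : Fin n) : ℕ) = min (a + min d (y.1 - u)) (n - 1) := rfl
  have := x.2
  have := y.2
  omega

lemma Fmap_mem (n a d u : ℕ) : Fmap n a d u ∈ OCT n :=
  ⟨Fmap_contr n a d u, Fmap_mono n a d u⟩

lemma Fmap_reg {n a d u : ℕ} (had : a + d ≤ n - 1) (hud : u + d ≤ n - 1) :
    Fmap n a d u * Fmap n u d a * Fmap n a d u = Fmap n a d u := by
  funext x
  apply Fin.ext
  show (Fmap n a d u (Fmap n u d a (Fmap n a d u x))).1 = (Fmap n a d u x).1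
  rw [Fmap_val had, Fmap_val hud, Fmap_val had]
  omega

/-- contraction in a `Nat`-friendly form -/
lemma contr_nat {n : ℕ} {α : Function.End (Fin n)} (h : IsContraction α) (x y : Fin n) :
    ((α x : Fin n) : ℕ) - ((α y : Fin n) : ℕ) ≤ (x.1 - y.1) + (y.1 - x.1) ∧
    ((α y : Fin n) : ℕ) - ((α x : Fin n) : ℕ) ≤ (x.1 - y.1) + (y.1 - x.1) := by
  have := h x y
  rw [abs_natCast_sub, abs_natCast_sub] at this
  omega

def Sfin (n : ℕ) : Finset (ℕ × ℕ × ℕ) :=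
  (Finset.range n).biUnion fun c =>
    (Finset.range (n - c)) ×ˢ ({c} ×ˢ (if c = 0 then {0} else Finset.range (n - c)))

lemma mem_Sfin {n : ℕ} (hn : 1 ≤ n) {p : ℕ × ℕ × ℕ} :
    p ∈ Sfin n ↔ p.1 + p.2.1 ≤ n - 1 ∧ p.2.2 + p.2.1 ≤ n - 1 ∧ (p.2.1 = 0 → p.2.2 = 0) := by
  obtain ⟨a, d, u⟩ := p
  simp only [Sfin, Finset.mem_biUnion, Finset.mem_range, Finset.mem_product,
    Finset.mem_singleton]
  constructor
  · rintro ⟨c, hc, h1, h2, h3⟩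
    by_cases h0 : c = 0
    · rw [if_pos h0] at h3; rw [Finset.mem_singleton] at h3; omega
    · rw [if_neg h0, Finset.mem_range] at h3; omega
  · rintro ⟨h1, h2, h3⟩
    refine ⟨d, by omega, by omega, rfl, ?_⟩
    by_cases h0 : d = 0
    · rw [if_pos h0, Finset.mem_singleton]; exact h3 h0
    · rw [if_neg h0, Finset.mem_range]; omega

lemma mem_Sfin' {n : ℕ} (hn : 1 ≤ n) {a d u : ℕ} :
    (a, d, u) ∈ Sfin n ↔ a + d ≤ n - 1 ∧ u + d ≤ n - 1 ∧ (d = 0 → u = 0) :=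
  mem_Sfin hn

lemma regOCT_eq (n : ℕ) (hn : 1 ≤ n) :
    RegOCT n = (fun p : ℕ × ℕ × ℕ => Fmap n p.1 p.2.1 p.2.2) '' ↑(Sfin n) := by
  ext α
  constructor
  · rintro ⟨⟨hc, hm⟩, β, ⟨hβc, hβm⟩, hreg⟩
    have hreg' : ∀ x, α (β (α x)) = α x := fun x => congrFun hreg x
    have hmv : ∀ x y : Fin n, x.1 ≤ y.1 → ((α x : Fin n) : ℕ) ≤ ((α y : Fin n) : ℕ) :=
      fun x y h => hm h
    set z0 : Fin n := ⟨0, hn⟩ with hz0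
    set zl : Fin n := ⟨n - 1, by omega⟩ with hzl
    have hz0v : z0.1 = 0 := by rw [hz0]
    have hzlv : zl.1 = n - 1 := by rw [hzl]
    set a := ((α z0 : Fin n) : ℕ) with ha_def
    set b := ((α zl : Fin n) : ℕ) with hb_def
    have hal : ∀ x, a ≤ ((α x : Fin n) : ℕ) := fun x => hmv z0 x (by omega)
    have hbl : ∀ x, ((α x : Fin n) : ℕ) ≤ b := fun x => hmv x zl (by have := x.2; omega)
    have han : a < n := (α z0).2
    have hbn : b < n := (α zl).2
    rcases Nat.eq_or_lt_of_le (hal zl) with hconst | hab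
    · -- constant map
      refine ⟨(a, 0, 0), ?_, ?_⟩
      · rw [Finset.mem_coe, mem_Sfin' hn]
        refine ⟨by omega, by omega, fun _ => rfl⟩
      · funext x
        apply Fin.ext
        show (Fmap n a 0 0 x).1 = _
        rw [Fmap_val (by omega)]
        have h1 := hal x
        have h2 := hbl x
        omega
    · -- a < b
      set d := b - a with hd_def
      have key : ∀ x : Fin n,
          ((β (α x) : Fin n) : ℕ) = ((β (α z0) : Fin n) : ℕ) + (((α x : Fin n) : ℕ) - a) := by
        intro x
        have h1 := contr_nat hc (β (α x)) (β (α z0))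
        rw [hreg' x, hreg' z0] at h1
        have h2 := contr_nat hβc (α x) (α z0)
        have h3 : ((β (α z0) : Fin n) : ℕ) ≤ ((β (α x) : Fin n) : ℕ) := by
          have : (α z0 : Fin n) ≤ α x := hal x
          exact hβm this
        have h4 := hal x
        omega
      set u := ((β (α z0) : Fin n) : ℕ) with hu_def
      have hun : u < n := (β (α z0)).2
      have hudn : u + d ≤ n - 1 := by
        have h1 := key zl
        have h2 := (β (α zl)).2
        omega
      set xu : Fin n := ⟨u, hun⟩ with hxu_def
      set xt : Fin n := ⟨u + d, by omega⟩ with hxt_def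
      have hxuv : xu.1 = u := by rw [hxu_def]
      have hxtv : xt.1 = u + d := by rw [hxt_def]
      have hβz0 : β (α z0) = xu := Fin.ext (by rw [hxuv])
      have hxu : ((α xu : Fin n) : ℕ) = a := by
        rw [← hβz0, hreg' z0]
      have hβzl : β (α zl) = xt := by
        apply Fin.ext
        have h1 := key zl
        show ((β (α zl) : Fin n) : ℕ) = u + d
        omega
      have hxt : ((α xt : Fin n) : ℕ) = b := by
        rw [← hβzl, hreg' zl]
      have hvals : ∀ x : Fin n, ((α x : Fin n) : ℕ) = a + min d (x.1 - u) := by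
        intro x
        rcases Nat.lt_or_ge x.1 u with h | h
        · have h1 := hmv x xu (le_of_lt h)
          have h2 := hal x
          rw [hxu] at h1
          have hx : x.1 - u = 0 := by omega
          rw [hx]
          omega
        · rcases Nat.lt_or_ge x.1 (u + d) with h2 | h2
          · have c1 := contr_nat hc x xu
            have c2 := contr_nat hc xt x
            rw [hxu] at c1
            rw [hxt] at c2
            have h3 := hal x
            have h4 := hbl x
            omega
          · have h1 := hmv xt x (by omega)
            rw [hxt] at h1
            have h4 := hbl x
            omega
      refine ⟨(a, d, u), ?_, ?_⟩
      · rw [Finset.mem_coe, mem_Sfin' hn]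
        refine ⟨by omega, hudn, fun h0 => by omega⟩
      · funext x
        apply Fin.ext
        show (Fmap n a d u x).1 = _
        rw [Fmap_val (by omega)]
        exact (hvals x).symm
  · rintro ⟨⟨a, d, u⟩, hp, rfl⟩
    rw [Finset.mem_coe, mem_Sfin hn] at hp
    obtain ⟨had, hud, -⟩ := hp
    exact ⟨Fmap_mem n a d u, Fmap n u d a, Fmap_mem n u d a, Fmap_reg had hud⟩

lemma Fmap_injOn (n : ℕ) (hn : 1 ≤ n) :
    Set.InjOn (fun p : ℕ × ℕ × ℕ => Fmap n p.1 p.2.1 p.2.2) ↑(Sfin n) := by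
  rintro ⟨a, d, u⟩ hp ⟨a', d', u'⟩ hp' h
  rw [Finset.mem_coe, mem_Sfin' hn] at hp hp'
  obtain ⟨had, hud, hz⟩ := hp
  obtain ⟨had', hud', hz'⟩ := hp'
  simp only at h
  have hv : ∀ j : ℕ, j < n → a + min d (j - u) = a' + min d' (j - u') := by
    intro j hj
    have h1 : (Fmap n a d u ⟨j, hj⟩).1 = (Fmap n a' d' u' ⟨j, hj⟩).1 := by
      rw [h]
    rw [Fmap_val had, Fmap_val had'] at h1
    exact h1
  have e0 := hv 0 hn
  have el := hv (n - 1) (by omega)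
  have haa : a = a' := by omega
  have hdd : d = d' := by omega
  rcases Nat.eq_zero_or_pos d with h0 | h0
  · have : u = 0 := hz h0
    have : u' = 0 := hz' (by omega)
    simp_all
  · have e1 := hv u' (by omega)
    have e2 := hv u (by omega)
    have huu : u = u' := by omega
    simp_all

lemma six_sum (m : ℕ) :
    6 * ∑ i ∈ Finset.range m, (i + 1) * (i + 1) = m * (m + 1) * (2 * m + 1) := by
  induction m with
  | zero => simp
  | succ k ih => rw [Finset.sum_range_succ, Nat.mul_add, ih]; ring

lemma Sfin_card (n : ℕ) (hn : 1 ≤ n) :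
    6 * (Sfin n).card = n * (n - 1) * (2 * n - 1) + 6 * n := by
  have hcard : (Sfin n).card
      = ∑ c ∈ Finset.range n, (n - c) * (if c = 0 then 1 else (n - c)) := by
    rw [Sfin, Finset.card_biUnion]
    · refine Finset.sum_congr rfl fun c _ => ?_
      rw [Finset.card_product, Finset.card_product, Finset.card_range, Finset.card_singleton]
      split_ifs <;> simp [Finset.card_range]
    · intro c1 h1 c2 h2 hne
      simp only [Function.onFun]
      rw [Finset.disjoint_left]
      rintro ⟨a, d, u⟩ hm1 hm2
      rw [Finset.mem_product, Finset.mem_product, Finset.mem_singleton] at hm1 hm2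
      exact hne (hm1.2.1 ▸ hm2.2.1)
  obtain ⟨m, rfl⟩ : ∃ m, n = m + 1 := ⟨n - 1, by omega⟩
  rw [hcard, Finset.sum_range_succ']
  have hterm : ∀ i ∈ Finset.range m,
      (m + 1 - (i + 1)) * (if i + 1 = 0 then 1 else (m + 1 - (i + 1)))
        = (m - i) * (m - i) := by
    intro i hi
    rw [if_neg (by omega)]
    congr 1 <;> omega
  rw [Finset.sum_congr rfl hterm]
  have hrefl : ∑ i ∈ Finset.range m, (m - i) * (m - i)
      = ∑ i ∈ Finset.range m, (i + 1) * (i + 1) := by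
    rw [← Finset.sum_range_reflect (fun j => (j + 1) * (j + 1)) m]
    refine Finset.sum_congr rfl fun i hi => ?_
    rw [Finset.mem_range] at hi
    have : m - 1 - i + 1 = m - i := by omega
    rw [this]
  rw [hrefl, if_pos rfl]
  have h6 := six_sum m
  have h1 : m + 1 - 1 = m := rfl
  have h2 : 2 * (m + 1) - 1 = 2 * m + 1 := by omega
  rw [h1, h2, Nat.mul_add]
  rw [h6]
  simp only [Nat.sub_zero]
  ring

end RegOCTCount

/-- `|Reg(OCT_n)| = (n(n-1)(2n-1) + 6n)/6`. -/
theorem stmt_1 (n : ℕ) (hn : 1 ≤ n) :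
    (RegOCT n).ncard = (n * (n - 1) * (2 * n - 1) + 6 * n) / 6 := by
  rw [RegOCTCount.regOCT_eq n hn,
    Set.ncard_image_of_injOn (RegOCTCount.Fmap_injOn n hn),
    Set.ncard_coe_finset]
  have h6 := RegOCTCount.Sfin_card n hn
  omega
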